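/- Let Q be a symmetric n×n matrix with negative minimum eigenvalue λ_Q and g ∈ ℝⁿ. Define h(y) = yᵀQy + 2gᵀy. Then h has no local minimum on the open unit ball {y : ‖y‖ < 1}. -/

import Mathlib

open Matrix

theorem no_local_min_open_ball {n : ℕ} (Q : Matrix (Fin n) (Fin n) ℝ)
    (g : EuclideanSpace ℝ (Fin n)) (lamQ : ℝ)
    (hQ : Q.IsSymm)
    (hlb : ∀ y : EuclideanSpace ℝ (Fin n), lamQ * ‖y‖ ^ 2 ≤ y ⬝ᵥ Q.mulVec y)
    (hev : ∃ v : EuclideanSpace ℝ (Fin n), v ≠ 0 ∧ Q.mulVec v = lamQ • (v : Fin n → ℝ))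
    (hneg : lamQ < 0) :
    ∀ x : EuclideanSpace ℝ (Fin n), ‖x‖ < 1 →
      ¬ IsLocalMin (fun y : EuclideanSpace ℝ (Fin n) => y ⬝ᵥ Q.mulVec y + 2 * (g ⬝ᵥ y)) x := by
  intro x hx hmin
  obtain ⟨v, hv0, hvQ⟩ := hev
  set f : EuclideanSpace ℝ (Fin n) → ℝ :=
    fun y => y ⬝ᵥ Q.mulVec y + 2 * (g ⬝ᵥ y) with hf
  have hvv : (0 : ℝ) < (v : Fin n → ℝ) ⬝ᵥ v := by
    rcases lt_or_eq_of_le (Finset.sum_nonneg fun i _ => mul_self_nonneg (v i) :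
        (0:ℝ) ≤ (v : Fin n → ℝ) ⬝ᵥ v) with h | h
    · exact h
    · exact absurd ((dotProduct_self_eq_zero).mp h.symm) (fun h' => hv0 (WithLp.ofLp_injective 2 h'))
  have hvnorm : (0 : ℝ) < ‖v‖ := norm_pos_iff.mpr hv0
  -- symmetry
  have hsym : (v : Fin n → ℝ) ⬝ᵥ Q.mulVec x = lamQ * ((x : Fin n → ℝ) ⬝ᵥ v) := by
    rw [Matrix.dotProduct_mulVec, show Q.vecMul v = Q.mulVec v by
      rw [← Matrix.mulVec_transpose, hQ.eq], hvQ, smul_dotProduct, smul_eq_mul,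
      dotProduct_comm]
  set a : ℝ := lamQ * ((x : Fin n → ℝ) ⬝ᵥ v) + (g : Fin n → ℝ) ⬝ᵥ v with ha
  set c : ℝ := lamQ * ((v : Fin n → ℝ) ⬝ᵥ v) with hc
  have hcneg : c < 0 := mul_neg_of_neg_of_pos hneg hvv
  have key : ∀ t : ℝ, f (x + t • v) = f x + (2 * t * a + t ^ 2 * c) := by
    intro t
    have e1 : Q.mulVec (x + t • v : EuclideanSpace ℝ (Fin n))
        = Q.mulVec x + t • Q.mulVec v :=
      (Matrix.mulVec_add _ _ _).trans (by rw [← Matrix.mulVec_smul]; rfl)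
    have e2 : ∀ w : Fin n → ℝ,
        ((x + t • v : EuclideanSpace ℝ (Fin n)) : Fin n → ℝ) ⬝ᵥ w
          = (x : Fin n → ℝ) ⬝ᵥ w + t * ((v : Fin n → ℝ) ⬝ᵥ w) := fun w =>
      (add_dotProduct _ _ _).trans (by rw [← smul_eq_mul, ← smul_dotProduct]; rfl)
    have e3 : (g : Fin n → ℝ) ⬝ᵥ ((x + t • v : EuclideanSpace ℝ (Fin n)) : Fin n → ℝ)
        = (g : Fin n → ℝ) ⬝ᵥ x + t * ((g : Fin n → ℝ) ⬝ᵥ v) :=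
      (dotProduct_add _ _ _).trans (by rw [← smul_eq_mul, ← dotProduct_smul]; rfl)
    show (x + t • v : EuclideanSpace ℝ (Fin n)) ⬝ᵥ
        Q.mulVec (x + t • v : EuclideanSpace ℝ (Fin n))
        + 2 * ((g : Fin n → ℝ) ⬝ᵥ (x + t • v : EuclideanSpace ℝ (Fin n))) = _
    have e4 : (x : Fin n → ℝ) ⬝ᵥ Q.mulVec v = lamQ * ((x : Fin n → ℝ) ⬝ᵥ v) := by
      rw [hvQ]; exact (dotProduct_smul _ _ _).trans (smul_eq_mul ..)
    have e5 : (v : Fin n → ℝ) ⬝ᵥ Q.mulVec v = lamQ * ((v : Fin n → ℝ) ⬝ᵥ v) := by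
      rw [hvQ]; exact (dotProduct_smul _ _ _).trans (smul_eq_mul ..)
    rw [e1, e2, e3]
    simp only [dotProduct_add, dotProduct_smul, smul_eq_mul, e4, e5, hsym]
    simp only [hf, ha, hc]
    ring
  obtain ⟨ε, hε, hball⟩ := Metric.eventually_nhds_iff.mp hmin
  set δ : ℝ := ε / (2 * ‖v‖) with hδ
  have hδpos : 0 < δ := div_pos hε (by positivity)
  set t : ℝ := if 0 ≤ a then -δ else δ with ht
  have hta : t * a ≤ 0 := by
    by_cases h : 0 ≤ a
    · simp only [ht, if_pos h]
      exact mul_nonpos_of_nonpos_of_nonneg (by linarith) h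
    · simp only [ht, if_neg h]
      exact mul_nonpos_of_nonneg_of_nonpos hδpos.le (by linarith)
  have htabs : |t| = δ := by
    by_cases h : 0 ≤ a <;> simp [ht, h, abs_of_pos hδpos]
  have hdist : dist (x + t • v) x < ε := by
    rw [dist_eq_norm, add_sub_cancel_left, norm_smul, Real.norm_eq_abs, htabs, hδ]
    rw [div_mul_eq_mul_div, mul_comm]
    rw [div_lt_iff₀ (by positivity)]
    nlinarith
  have h1 : f x ≤ f (x + t • v) := hball hdist
  rw [key t] at h1
  have ht2 : (0:ℝ) < t ^ 2 := by
    have : t ≠ 0 := by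
      intro h0
      rw [h0, abs_zero] at htabs
      linarith
    positivity
  nlinarith
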